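/- For ψ(x,y) = (2x² − y²)/2 and η = xy, the functions a = (2x² + y²)/(4x² + y²) and b = −xy/(4x² + y²) have no limit at the origin: the limit of a along the line y = 0 is 1/2 while along x = 0 it is 1; the limit of b along the line y = x is −1/5 while along y = 0 it is 0. In particular neither a nor b extends continuously to the X-point (0,0). -/

import Mathlib

/-- The structure functions a, b of Example 2 have direction-dependent limits at the
origin and hence admit no limit (no continuous extension) at the X-point. -/
theorem example2_no_limit_at_Xpoint :
    let a : ℝ × ℝ → ℝ := fun p => (2 * p.1 ^ 2 + p.2 ^ 2) / (4 * p.1 ^ 2 + p.2 ^ 2)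
    let b : ℝ × ℝ → ℝ := fun p => -(p.1 * p.2) / (4 * p.1 ^ 2 + p.2 ^ 2)
    Filter.Tendsto (fun x : ℝ => a (x, 0)) (nhdsWithin 0 {0}ᶜ) (nhds (1 / 2)) ∧
    Filter.Tendsto (fun y : ℝ => a (0, y)) (nhdsWithin 0 {0}ᶜ) (nhds 1) ∧
    Filter.Tendsto (fun t : ℝ => b (t, t)) (nhdsWithin 0 {0}ᶜ) (nhds (-(1 / 5))) ∧
    Filter.Tendsto (fun x : ℝ => b (x, 0)) (nhdsWithin 0 {0}ᶜ) (nhds 0) ∧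
    (¬ ∃ L : ℝ, Filter.Tendsto a (nhdsWithin 0 {(0 : ℝ × ℝ)}ᶜ) (nhds L)) ∧
    (¬ ∃ L : ℝ, Filter.Tendsto b (nhdsWithin 0 {(0 : ℝ × ℝ)}ᶜ) (nhds L)) := by
  intro a b
  have hne : ∀ᶠ x : ℝ in nhdsWithin 0 {0}ᶜ, x ≠ 0 := eventually_mem_nhdsWithin
  have ha1 : Filter.Tendsto (fun x : ℝ => a (x, 0)) (nhdsWithin 0 {0}ᶜ) (nhds (1 / 2)) := by
    refine tendsto_const_nhds.congr' ?_
    filter_upwards [hne] with x hx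
    simp only [a]
    have : (4 : ℝ) * x ^ 2 + 0 ^ 2 ≠ 0 := by positivity
    field_simp
    ring
  have ha2 : Filter.Tendsto (fun y : ℝ => a (0, y)) (nhdsWithin 0 {0}ᶜ) (nhds 1) := by
    refine tendsto_const_nhds.congr' ?_
    filter_upwards [hne] with y hy
    simp only [a]
    have : (4 : ℝ) * 0 ^ 2 + y ^ 2 ≠ 0 := by positivity
    field_simp
    ring
  have hb1 : Filter.Tendsto (fun t : ℝ => b (t, t)) (nhdsWithin 0 {0}ᶜ) (nhds (-(1 / 5))) := by
    refine tendsto_const_nhds.congr' ?_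
    filter_upwards [hne] with t ht
    simp only [b]
    have : (4 : ℝ) * t ^ 2 + t ^ 2 ≠ 0 := by positivity
    field_simp
    ring
  have hb2 : Filter.Tendsto (fun x : ℝ => b (x, 0)) (nhdsWithin 0 {0}ᶜ) (nhds 0) := by
    refine tendsto_const_nhds.congr' ?_
    filter_upwards [hne] with x hx
    simp [b]
  -- lines tend to the punctured neighborhood of the origin
  have hline : ∀ c₁ c₂ : ℝ, (c₁, c₂) ≠ ((0 : ℝ), (0 : ℝ)) →
      Filter.Tendsto (fun t : ℝ => ((c₁ * t, c₂ * t) : ℝ × ℝ)) (nhdsWithin 0 {0}ᶜ)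
        (nhdsWithin 0 {(0 : ℝ × ℝ)}ᶜ) := by
    intro c₁ c₂ hc
    rw [tendsto_nhdsWithin_iff]
    constructor
    · have : Filter.Tendsto (fun t : ℝ => ((c₁ * t, c₂ * t) : ℝ × ℝ)) (nhds 0) (nhds 0) := by
        have h1 : Continuous (fun t : ℝ => ((c₁ * t, c₂ * t) : ℝ × ℝ)) := by continuity
        have := h1.tendsto 0
        simpa [show ((0:ℝ), (0:ℝ)) = (0 : ℝ × ℝ) from rfl] using this
      exact this.mono_left nhdsWithin_le_nhds
    · filter_upwards [hne] with t ht
      simp only [Set.mem_compl_iff, Set.mem_singleton_iff]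
      intro h
      rw [Prod.ext_iff] at h
      obtain ⟨h1, h2⟩ := h
      simp only [Prod.fst_zero, Prod.snd_zero] at h1 h2
      rcases mul_eq_zero.mp h1 with h | h
      · rcases mul_eq_zero.mp h2 with h' | h'
        · exact hc (by simp [h, h', Prod.ext_iff])
        · exact ht h'
      · exact ht h
  refine ⟨ha1, ha2, hb1, hb2, ?_, ?_⟩
  · rintro ⟨L, hL⟩
    have l1 := hL.comp (hline 1 0 (by simp))
    have l2 := hL.comp (hline 0 1 (by simp))
    simp only [Function.comp_def, one_mul, zero_mul] at l1 l2
    have e1 : L = 1 / 2 := tendsto_nhds_unique l1 ha1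
    have e2 : L = 1 := tendsto_nhds_unique l2 ha2
    norm_num [e1] at e2
  · rintro ⟨L, hL⟩
    have l1 := hL.comp (hline 1 1 (by simp))
    have l2 := hL.comp (hline 1 0 (by simp))
    simp only [Function.comp_def, one_mul, zero_mul] at l1 l2
    have e1 : L = -(1 / 5) := tendsto_nhds_unique l1 hb1
    have e2 : L = 0 := tendsto_nhds_unique l2 hb2
    norm_num [e1] at e2
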